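/- Let r be a relation on a type α (the parent-child edge relation of a predicate graph), let L : List α be a topological sort with respect to r, i.e., L.Pairwise (fun a b => ¬ r b a) (no edge goes from a later element to an earlier element), and let S : α → Prop be a decidable predicate that is closed under r-successors: for all a b, if r a b and S a then S b (S contains all descendants of its members). Then the concatenation L.filter (fun a => ¬ S a) ++ L.filter S is again a topological sort with respect to r, i.e., it satisfies Pairwise (fun a b => ¬ r b a). (This is Lemma 2: the concatenation L₁ ++ L₂ produced by the Validation algorithm, where L₂ consists of the invalid predicate nodes together with all their descendants and L₁ is the rest, is a topological sort of the predicate graph G(S).) -/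

import Mathlib

/-- Lemma 2: the concatenation `L₁ ++ L₂` produced by the Validation algorithm,
where `L₂` consists of the invalid nodes together with all their descendants
(a set closed under successors) and `L₁` is the rest, is again a topological
sort of the predicate graph. -/
theorem filter_concat_topological_sort {α : Type*} (r : α → α → Prop)
    (L : List α) (S : α → Prop) [DecidablePred S]
    (htopo : L.Pairwise (fun a b => ¬ r b a))
    (hclosed : ∀ a b, r a b → S a → S b) :
    (L.filter (fun a => decide ¬ S a) ++ L.filter (fun a => decide (S a))).Pairwise
      (fun a b => ¬ r b a) := by
  rw [List.pairwise_append]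
  refine ⟨htopo.sublist List.filter_sublist,
          htopo.sublist List.filter_sublist, ?_⟩
  intro a ha b hb hr
  have hSa : ¬ S a := by simpa using List.of_mem_filter ha
  have hSb : S b := by simpa using List.of_mem_filter hb
  exact hSa (hclosed b a hr hSb)
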